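/- Let ν, τ₁, τ₂ be a positively oriented orthonormal basis of ℝ³ and let L : ℝ³ → ℝ³ be self-adjoint on span{τ₁,τ₂} with L ν = 0 and with eigenvalues κ₁, κ₂ on span{τ₁,τ₂}. Define the 3×3 matrix ξ₁ := τ₁ ⊗ (L τ₂) - τ₂ ⊗ (L τ₁). Then ν · (cof ξ₁) ν = κ₁ κ₂. -/

import Mathlib

open Matrix

/-- The cofactor matrix of a 3×3 matrix: the transpose of the adjugate. -/
noncomputable def cof (M : Matrix (Fin 3) (Fin 3) ℝ) : Matrix (Fin 3) (Fin 3) ℝ :=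
  M.adjugateᵀ

theorem gauss_curvature_from_cof_xi1
    (L : Matrix (Fin 3) (Fin 3) ℝ) (τ₁ τ₂ ν u₁ u₂ : Fin 3 → ℝ) (κ₁ κ₂ : ℝ)
    (hLν : L.mulVec ν = 0)
    (h11 : τ₁ ⬝ᵥ τ₁ = 1) (h22 : τ₂ ⬝ᵥ τ₂ = 1) (hνν : ν ⬝ᵥ ν = 1)
    (h12 : τ₁ ⬝ᵥ τ₂ = 0) (h1ν : τ₁ ⬝ᵥ ν = 0) (h2ν : τ₂ ⬝ᵥ ν = 0)
    (hdet : Matrix.det (Matrix.of ![τ₁, τ₂, ν])ᵀ = 1)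
    -- self-adjointness of `L` on `span {τ₁, τ₂}` with eigenvalues κ₁, κ₂ :
    -- there is an orthonormal basis of eigenvectors of the restriction
    (hu₁ : u₁ ∈ Submodule.span ℝ ({τ₁, τ₂} : Set (Fin 3 → ℝ)))
    (hu₂ : u₂ ∈ Submodule.span ℝ ({τ₁, τ₂} : Set (Fin 3 → ℝ)))
    (hu11 : u₁ ⬝ᵥ u₁ = 1) (hu22 : u₂ ⬝ᵥ u₂ = 1) (hu12 : u₁ ⬝ᵥ u₂ = 0)
    (hLu₁ : L.mulVec u₁ = κ₁ • u₁) (hLu₂ : L.mulVec u₂ = κ₂ • u₂) :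
    ν ⬝ᵥ (cof (Matrix.vecMulVec τ₁ (L.mulVec τ₂)
        - Matrix.vecMulVec τ₂ (L.mulVec τ₁))).mulVec ν = κ₁ * κ₂ := by
  set w₁ := L.mulVec τ₁ with hw₁
  set w₂ := L.mulVec τ₂ with hw₂
  set ξ : Matrix (Fin 3) (Fin 3) ℝ := Matrix.vecMulVec τ₁ w₂ - Matrix.vecMulVec τ₂ w₁ with hξdef
  set T : Matrix (Fin 3) (Fin 3) ℝ := (Matrix.of ![τ₁, τ₂, ν])ᵀ with hTdef
  -- component forms of the orthonormality relations
  have h11c := h11; have h22c := h22; have hννc := hνν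
  have h12c := h12; have h1νc := h1ν; have h2νc := h2ν
  simp only [dotProduct, Fin.sum_univ_three] at h11c h22c hννc h12c h1νc h2νc
  -- Part 1 : scalar determinant identity
  obtain ⟨p, q, hpq⟩ := Submodule.mem_span_pair.mp hu₁
  obtain ⟨r, s, hrs⟩ := Submodule.mem_span_pair.mp hu₂
  have expand : ∀ a b c d : ℝ,
      (a • τ₁ + b • τ₂) ⬝ᵥ (c • τ₁ + d • τ₂) = a*c + b*d := by
    intro a b c d
    simp [dotProduct_add, add_dotProduct, dotProduct_smul, smul_dotProduct,
      h11, h22, h12, dotProduct_comm τ₂ τ₁]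
    ring
  have hp : p*p + q*q = 1 := by rw [← expand p q p q, hpq, hu11]
  have hr : r*r + s*s = 1 := by rw [← expand r s r s, hrs, hu22]
  have ho : p*r + q*s = 0 := by rw [← expand p q r s, hpq, hrs, hu12]
  set ε : ℝ := p*s - q*r with hεdef
  have hε : ε * ε = 1 := by
    rw [hεdef]; linear_combination (r*r+s*s)*hp + hr - (p*r+q*s)*ho
  have e1 : ε • τ₁ = s • u₁ - q • u₂ := by rw [← hpq, ← hrs]; module
  have e2 : ε • τ₂ = p • u₂ - r • u₁ := by rw [← hpq, ← hrs]; module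
  have eL1 : ε • w₁ = (s*κ₁) • u₁ - (q*κ₂) • u₂ := by
    rw [hw₁, ← Matrix.mulVec_smul, e1, Matrix.mulVec_sub, Matrix.mulVec_smul,
      Matrix.mulVec_smul, hLu₁, hLu₂]
    module
  have eL2 : ε • w₂ = (p*κ₂) • u₂ - (r*κ₁) • u₁ := by
    rw [hw₂, ← Matrix.mulVec_smul, e2, Matrix.mulVec_sub, Matrix.mulVec_smul,
      Matrix.mulVec_smul, hLu₁, hLu₂]
    module
  have uexpand : ∀ a b c d : ℝ,
      (a • u₁ - b • u₂) ⬝ᵥ (c • u₁ - d • u₂) = a*c + b*d := by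
    intro a b c d
    simp [dotProduct_sub, sub_dotProduct, dotProduct_smul, smul_dotProduct,
      hu11, hu22, hu12, dotProduct_comm u₂ u₁]
    ring
  have a11 : w₁ ⬝ᵥ τ₁ = s*κ₁*s + q*κ₂*q := by
    have h := uexpand (s*κ₁) (q*κ₂) s q
    rw [← eL1, ← e1] at h
    simp only [smul_dotProduct, dotProduct_smul, smul_eq_mul] at h
    linear_combination h - (w₁ ⬝ᵥ τ₁) * hε
  have a12 : w₁ ⬝ᵥ τ₂ = -(s*κ₁*r) - q*κ₂*p := by
    have h2 : ε • τ₂ = (-r) • u₁ - (-p) • u₂ := by rw [e2]; module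
    have h := uexpand (s*κ₁) (q*κ₂) (-r) (-p)
    rw [← eL1, ← h2] at h
    simp only [smul_dotProduct, dotProduct_smul, smul_eq_mul] at h
    linear_combination h - (w₁ ⬝ᵥ τ₂) * hε
  have a21 : w₂ ⬝ᵥ τ₁ = -(r*κ₁*s) - p*κ₂*q := by
    have hL2 : ε • w₂ = (-(r*κ₁)) • u₁ - (-(p*κ₂)) • u₂ := by rw [eL2]; module
    have h := uexpand (-(r*κ₁)) (-(p*κ₂)) s q
    rw [← hL2, ← e1] at h
    simp only [smul_dotProduct, dotProduct_smul, smul_eq_mul] at h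
    linear_combination h - (w₂ ⬝ᵥ τ₁) * hε
  have a22 : w₂ ⬝ᵥ τ₂ = r*κ₁*r + p*κ₂*p := by
    have hL2 : ε • w₂ = (-(r*κ₁)) • u₁ - (-(p*κ₂)) • u₂ := by rw [eL2]; module
    have h2 : ε • τ₂ = (-r) • u₁ - (-p) • u₂ := by rw [e2]; module
    have h := uexpand (-(r*κ₁)) (-(p*κ₂)) (-r) (-p)
    rw [← hL2, ← h2] at h
    simp only [smul_dotProduct, dotProduct_smul, smul_eq_mul] at h
    linear_combination h - (w₂ ⬝ᵥ τ₂) * hε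
  have hε' : (p*s-q*r)*(p*s-q*r) = 1 := by rw [← hεdef]; exact hε
  have hD : (w₂ ⬝ᵥ τ₁) * (-(w₁ ⬝ᵥ τ₂)) - (w₂ ⬝ᵥ τ₂) * (-(w₁ ⬝ᵥ τ₁)) = κ₁ * κ₂ := by
    rw [a11, a12, a21, a22]
    linear_combination κ₁*κ₂*hε'
  -- Part 2 : orthogonal conjugation
  have hT : Tᵀ * T = 1 := by
    ext i j
    fin_cases i <;> fin_cases j <;>
      simp [hTdef, Matrix.transpose_apply, Matrix.vecHead, Matrix.vecTail, Matrix.mul_apply, Fin.sum_univ_three, Matrix.one_apply] <;>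
      linarith [h11c, h22c, hννc, h12c, h1νc, h2νc]
  have hTT' : T * Tᵀ = 1 := mul_eq_one_comm.mp hT
  have hadjT : adjugate T = Tᵀ := by
    calc adjugate T = adjugate T * (T * Tᵀ) := by rw [hTT', Matrix.mul_one]
    _ = (adjugate T * T) * Tᵀ := by rw [Matrix.mul_assoc]
    _ = Tᵀ := by rw [Matrix.adjugate_mul, hdet, one_smul, Matrix.one_mul]
  have hadjTt : adjugate Tᵀ = T := by
    rw [← Matrix.adjugate_transpose, hadjT, Matrix.transpose_transpose]
  set N : Matrix (Fin 3) (Fin 3) ℝ := Tᵀ * ξ * T with hNdef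
  have hξ : T * N * Tᵀ = ξ := by
    rw [hNdef]
    simp only [Matrix.mul_assoc]
    rw [hTT', Matrix.mul_one, ← Matrix.mul_assoc, hTT', Matrix.one_mul]
  have hadjξ : adjugate ξ = T * adjugate N * Tᵀ := by
    rw [← hξ, Matrix.adjugate_mul_distrib, Matrix.adjugate_mul_distrib,
      hadjTt, hadjT]
    simp only [Matrix.mul_assoc]
  have hcof : cof ξ = T * (adjugate N)ᵀ * Tᵀ := by
    rw [cof, hadjξ]
    simp only [Matrix.transpose_mul, Matrix.transpose_transpose, Matrix.mul_assoc]
  have he : Tᵀ.mulVec ν = ![0, 0, 1] := by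
    funext i
    fin_cases i <;>
      simp [hTdef, Matrix.transpose_apply, Matrix.vecHead, Matrix.vecTail, Matrix.mulVec, dotProduct, Fin.sum_univ_three] <;>
      linarith [h1νc, h2νc, hννc]
  have hv : ν ᵥ* T = ![0, 0, 1] := by
    funext j
    fin_cases j <;>
      simp [hTdef, Matrix.transpose_apply, Matrix.vecHead, Matrix.vecTail, Matrix.vecMul, dotProduct, Fin.sum_univ_three] <;>
      linarith [h1νc, h2νc, hννc]
  rw [hcof, show (T * (adjugate N)ᵀ * Tᵀ) *ᵥ ν = T *ᵥ ((adjugate N)ᵀ *ᵥ (Tᵀ *ᵥ ν)) from by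
      rw [← Matrix.mulVec_mulVec, ← Matrix.mulVec_mulVec],
    he, Matrix.dotProduct_mulVec, hv]
  have step1 : (adjugate N)ᵀ *ᵥ ![0, 0, 1] = fun i => adjugate N 2 i := by
    funext i
    simp [Matrix.mulVec, dotProduct, Fin.sum_univ_three]
  have step2 : (![0, 0, 1] : Fin 3 → ℝ) ⬝ᵥ (fun i => adjugate N 2 i) = adjugate N 2 2 := by
    simp [dotProduct, Fin.sum_univ_three]
  rw [step1, step2]
  have adj22 : adjugate N 2 2 = N 0 0 * N 1 1 - N 0 1 * N 1 0 := by
    rw [Matrix.adjugate_fin_three]; simp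
  -- entries of N
  have hmul : ∀ v : Fin 3 → ℝ, ξ.mulVec v = (w₂ ⬝ᵥ v) • τ₁ - (w₁ ⬝ᵥ v) • τ₂ := by
    intro v
    rw [hξdef, Matrix.sub_mulVec]
    congr 1 <;>
    · funext i
      simp [Matrix.mulVec, Matrix.vecMulVec_apply, dotProduct, Finset.mul_sum,
        mul_assoc, mul_comm, mul_left_comm]
  have key : ∀ (i j : Fin 3), N i j = (![τ₁, τ₂, ν] i) ⬝ᵥ ξ.mulVec (![τ₁, τ₂, ν] j) := by
    intro i j
    fin_cases i <;> fin_cases j <;>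
      · simp [hNdef, hTdef, Matrix.transpose_apply, Matrix.vecHead, Matrix.vecTail, Matrix.mul_apply, Matrix.mulVec, Matrix.vecMul, dotProduct, Fin.sum_univ_three]
  have hN00 : N 0 0 = w₂ ⬝ᵥ τ₁ := by
    rw [key 0 0]; simp only [Matrix.cons_val_zero]
    rw [hmul]
    simp [dotProduct_sub, dotProduct_smul, h11, h12]
  have hN01 : N 0 1 = w₂ ⬝ᵥ τ₂ := by
    rw [key 0 1]; simp only [Matrix.cons_val_zero, Matrix.cons_val_one, Matrix.head_cons]
    rw [hmul]
    simp [dotProduct_sub, dotProduct_smul, h11, h12]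
  have hN10 : N 1 0 = -(w₁ ⬝ᵥ τ₁) := by
    rw [key 1 0]; simp only [Matrix.cons_val_zero, Matrix.cons_val_one, Matrix.head_cons]
    rw [hmul]
    simp [dotProduct_sub, dotProduct_smul, h22, dotProduct_comm τ₂ τ₁, h12]
  have hN11 : N 1 1 = -(w₁ ⬝ᵥ τ₂) := by
    rw [key 1 1]; simp only [Matrix.cons_val_one, Matrix.head_cons]
    rw [hmul]
    simp [dotProduct_sub, dotProduct_smul, h22, dotProduct_comm τ₂ τ₁, h12]
  rw [adj22, hN00, hN01, hN10, hN11]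
  linarith [hD]
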